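/- Let f : ℝ → ℝ be continuous with f = 0 on (-∞,0), and suppose θF(t) ≤ f(t)t for all t > 0 where F(t) = ∫₀ᵗ f and θ > 2. Fix a > 0, V₀ > 0, K > 2 with f(a)/a = V₀/K, and assume t ↦ f(t)/t is increasing on (0,∞). Define f̃(t) = f(t) for t ≤ a and f̃(t) = (V₀/K)t for t > a, and F̃(t) = ∫₀ᵗ f̃. Then for all t > 0: 0 ≤ 2F̃(t) ≤ f̃(t)t ≤ (V₀/K)t². -/

import Mathlib

open Filter Set MeasureTheory

theorem stmt1 (f : ℝ → ℝ) (hfc : Continuous f) (hfneg : ∀ t < (0:ℝ), f t = 0)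
    (θ : ℝ) (hθ : 2 < θ)
    (hAR : ∀ t > (0:ℝ), 0 < θ * (∫ τ in (0:ℝ)..t, f τ) ∧
      θ * (∫ τ in (0:ℝ)..t, f τ) ≤ f t * t)
    (a V₀ K : ℝ) (ha : 0 < a) (hV₀ : 0 < V₀) (hK : 2 < K)
    (haK : f a / a = V₀ / K)
    (hmono : StrictMonoOn (fun t => f t / t) (Set.Ioi 0))
    (ftil : ℝ → ℝ) (hftil : ftil = fun t => if t ≤ a then f t else V₀/K * t) :
    ∀ t > (0:ℝ),
      0 ≤ 2 * (∫ τ in (0:ℝ)..t, ftil τ) ∧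
      2 * (∫ τ in (0:ℝ)..t, ftil τ) ≤ ftil t * t ∧
      ftil t * t ≤ V₀/K * t^2 := by
  have hVK : 0 < V₀ / K := div_pos hV₀ (by linarith)
  -- f 0 = 0
  have hf0 : f 0 = 0 := by
    have h1 : Tendsto f (nhdsWithin 0 (Iio 0)) (nhds (f 0)) :=
      (hfc.tendsto 0).mono_left nhdsWithin_le_nhds
    have h2 : Tendsto f (nhdsWithin 0 (Iio 0)) (nhds 0) := by
      apply Tendsto.congr' _ tendsto_const_nhds
      filter_upwards [self_mem_nhdsWithin] with x hx
      exact (hfneg x hx).symm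
    exact tendsto_nhds_unique h1 h2
  have hfa : f a = V₀ / K * a := by
    rw [← haK]; field_simp
  -- f positive on positives
  have fpos : ∀ t > (0:ℝ), 0 < f t := by
    intro t ht
    obtain ⟨h1, h2⟩ := hAR t ht
    by_contra h
    push_neg at h
    nlinarith
  -- continuity of ftil
  have hcont : Continuous ftil := by
    rw [hftil]
    apply Continuous.if_le hfc (continuous_const.mul continuous_id) continuous_id
      continuous_const
    intro x hx
    simp only [id] at hx ⊢; rw [hx, hfa]; rfl
  have hftil0 : ftil 0 = 0 := by
    rw [hftil]; simp [ha.le, hf0]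
  -- Claim A : ftil t ≤ V₀/K * t
  have claimA : ∀ t > (0:ℝ), ftil t ≤ V₀ / K * t := by
    intro t ht
    rw [hftil]
    by_cases h : t ≤ a
    · simp only [h, if_true]
      rcases eq_or_lt_of_le h with rfl | hlt
      · rw [hfa]
      · have := hmono (mem_Ioi.mpr ht) (mem_Ioi.mpr ha) hlt
        simp only at this
        rw [haK] at this
        calc f t = f t / t * t := by field_simp
        _ ≤ V₀ / K * t := by nlinarith
    · simp [h]
  -- ftil nonneg
  have hnn : ∀ t, 0 ≤ t → 0 ≤ ftil t := by
    intro t ht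
    rcases eq_or_lt_of_le ht with rfl | ht
    · rw [hftil0]
    · rw [hftil]
      by_cases h : t ≤ a
      · simp only [h, if_true]; exact (fpos t ht).le
      · simp only [h, if_false]; positivity
  -- ratio monotone : ftil s * t ≤ ftil t * s for 0 < s ≤ t
  have claimB : ∀ s t : ℝ, 0 < s → s ≤ t → ftil s * t ≤ ftil t * s := by
    intro s t hs hst
    have ht : 0 < t := hs.trans_le hst
    by_cases hta : t ≤ a
    · have hsa : s ≤ a := hst.trans hta
      rw [hftil]; simp only [hsa, hta, if_true]
      have h : f s / s ≤ f t / t := by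
        rcases eq_or_lt_of_le hst with rfl | h
        · exact le_rfl
        · simpa using (hmono (mem_Ioi.mpr hs) (mem_Ioi.mpr ht) h).le
      rw [div_le_div_iff₀ hs ht] at h
      linarith
    · push_neg at hta
      by_cases hsa : s ≤ a
      · have h1 : ftil s ≤ V₀ / K * s := claimA s hs
        have h2 : ftil t = V₀ / K * t := by rw [hftil]; simp [not_le.mpr hta]
        rw [h2]; nlinarith
      · push_neg at hsa
        have h1 : ftil s = V₀ / K * s := by rw [hftil]; simp [not_le.mpr hsa]
        have h2 : ftil t = V₀ / K * t := by rw [hftil]; simp [not_le.mpr hta]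
        rw [h1, h2]; nlinarith
  intro t ht
  have hint : IntervalIntegrable ftil volume 0 t := hcont.intervalIntegrable 0 t
  have hnonneg : 0 ≤ ∫ τ in (0:ℝ)..t, ftil τ := by
    apply intervalIntegral.integral_nonneg ht.le
    intro u hu
    exact hnn u hu.1
  have hkey : ∀ τ ∈ Icc (0:ℝ) t, ftil τ ≤ ftil t / t * τ := by
    intro τ hτ
    rcases eq_or_lt_of_le hτ.1 with rfl | hτ0
    · rw [hftil0]; simp
    · have := claimB τ t hτ0 hτ.2
      rw [div_mul_eq_mul_div, le_div_iff₀ ht]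
      linarith [this]
  have hgint : IntervalIntegrable (fun τ => ftil t / t * τ) volume 0 t :=
    (continuous_const.mul continuous_id).intervalIntegrable 0 t
  have hFle : (∫ τ in (0:ℝ)..t, ftil τ) ≤ ∫ τ in (0:ℝ)..t, ftil t / t * τ :=
    intervalIntegral.integral_mono_on ht.le hint hgint hkey
  have hcalc : (∫ τ in (0:ℝ)..t, ftil t / t * τ) = ftil t / t * (t ^ 2 / 2) := by
    rw [intervalIntegral.integral_const_mul, integral_id]
    ring
  rw [hcalc] at hFle
  refine ⟨by linarith, ?_, ?_⟩
  · have : ftil t / t * (t ^ 2 / 2) = ftil t * t / 2 := by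
      field_simp
    rw [this] at hFle
    linarith
  · have := claimA t ht
    nlinarith
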